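/- Fix an integer l ≥ 0 and a real g. For x > 0, define ψp(x) = L_l^{(g+l-1/2)}(-x²) and ψm(x) = L_l^{(g+l-3/2)}(-x²). Then the identity 8l·ψp·ψm + (2(1-2g-2l)/x)·ψp·ψm' - 4x·ψm·ψp' - 2·ψm'·ψp' = 0 holds for all x > 0. -/

import Mathlib

open Finset

/-- Generalized binomial coefficient `C(z, k) = z(z-1)⋯(z-k+1)/k!`. -/
noncomputable def genChoose (z : ℝ) (k : ℕ) : ℝ :=
  (descPochhammer ℝ k).eval z / (Nat.factorial k)

/-- The generalized Laguerre polynomial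
`L_n^{(α)}(x) = ∑_{k=0}^n (-1)^k C(n+α, n-k) x^k / k!`. -/
noncomputable def laguerre (n : ℕ) (α x : ℝ) : ℝ :=
  ∑ k ∈ range (n + 1),
    (-1 : ℝ) ^ k * genChoose ((n : ℝ) + α) (n - k) * x ^ k / (Nat.factorial k)

lemma desc_succ_left_eval (z : ℝ) (m : ℕ) :
    (descPochhammer ℝ (m+1)).eval z = z * (descPochhammer ℝ m).eval (z - 1) := by
  rw [descPochhammer_succ_left]
  simp [Polynomial.eval_comp]

lemma genChoose_succ (z : ℝ) (m : ℕ) :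
    ((m:ℝ)+1) * genChoose z (m+1) = z * genChoose (z-1) m := by
  unfold genChoose
  rw [desc_succ_left_eval, Nat.factorial_succ]
  push_cast
  have : (m:ℝ)+1 ≠ 0 := by positivity
  field_simp

lemma genChoose_pascal (z : ℝ) (m : ℕ) :
    genChoose z (m+1) = genChoose (z-1) (m+1) + genChoose (z-1) m := by
  unfold genChoose
  rw [desc_succ_left_eval, descPochhammer_succ_eval, Nat.factorial_succ]
  push_cast
  have : (m:ℝ)+1 ≠ 0 := by positivity
  have h2 : (Nat.factorial m : ℝ) ≠ 0 := by positivity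
  field_simp
  ring

lemma genChoose_zero (z : ℝ) : genChoose z 0 = 1 := by simp [genChoose]

lemma laguerre_alpha_sub (n : ℕ) (α x : ℝ) :
    laguerre (n+1) (α-1) x = laguerre (n+1) α x - laguerre n α x := by
  unfold laguerre
  rw [Finset.sum_range_succ
    (f := fun k => (-1 : ℝ) ^ k * genChoose ((↑(n+1) : ℝ) + (α-1)) (n+1 - k) * x ^ k / (Nat.factorial k)),
    Finset.sum_range_succ
    (f := fun k => (-1 : ℝ) ^ k * genChoose ((↑(n+1) : ℝ) + α) (n+1 - k) * x ^ k / (Nat.factorial k))]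
  have htop : (n+1) - (n+1) = 0 := by omega
  rw [htop, genChoose_zero, genChoose_zero]
  have hmain : ∑ k ∈ range (n+1), (-1:ℝ) ^ k * genChoose ((↑(n+1) : ℝ) + (α-1)) (n+1-k) * x ^ k / (Nat.factorial k)
      = ∑ k ∈ range (n+1), ((-1:ℝ) ^ k * genChoose ((↑(n+1) : ℝ) + α) (n+1-k) * x ^ k / (Nat.factorial k)
        - (-1:ℝ) ^ k * genChoose ((n : ℝ) + α) (n-k) * x ^ k / (Nat.factorial k)) := by
    apply Finset.sum_congr rfl
    intro k hk
    have hk' : k ≤ n := Nat.lt_succ_iff.mp (mem_range.mp hk)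
    have hs : n + 1 - k = (n - k) + 1 := by omega
    have hz1 : ((↑(n+1) : ℝ) + (α-1)) = ((↑(n+1) : ℝ) + α) - 1 := by ring
    have hz2 : ((↑(n+1) : ℝ) + α) - 1 = (n:ℝ) + α := by push_cast; ring
    rw [hs, hz1, genChoose_pascal (((↑(n+1):ℝ)) + α) (n-k), hz2]
    ring
  rw [hmain, Finset.sum_sub_distrib]
  ring

lemma laguerre_three_term (n : ℕ) (α x : ℝ) :
    ((n:ℝ)+1) * laguerre (n+1) α x + x * laguerre n (α+1) x
      = ((n:ℝ)+1+α) * laguerre n α x := by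
  set z : ℝ := (n:ℝ) + 1 + α with hz
  have hz1 : ((↑(n+1) : ℝ) + α) = z := by rw [hz]; push_cast; ring
  have hz2 : ((n:ℝ) + (α+1)) = z := by rw [hz]; ring
  set S : ℕ → ℝ := fun j => (-1:ℝ)^j * genChoose z (n+1-j) * x^j * j / (Nat.factorial j) with hS
  have hA : laguerre (n+1) α x
      = (∑ j ∈ range (n+1), (-1:ℝ)^j * genChoose z (n+1-j) * x^j / (Nat.factorial j))
        + (-1:ℝ)^(n+1) * x^(n+1) / (Nat.factorial (n+1)) := by
    rw [laguerre, Finset.sum_range_succ]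
    have htop : (n+1) - (n+1) = 0 := by omega
    rw [htop, genChoose_zero, hz1]
    push_cast
    ring
  have hB : laguerre n (α+1) x
      = ∑ j ∈ range (n+1), (-1:ℝ)^j * genChoose z (n-j) * x^j / (Nat.factorial j) := by
    rw [laguerre, hz2]
  rw [hA, hB, laguerre]
  have key : ∀ j ∈ range (n+1),
      ((n:ℝ)+1) * ((-1:ℝ)^j * genChoose z (n+1-j) * x^j / (Nat.factorial j))
      + x * ((-1:ℝ)^j * genChoose z (n-j) * x^j / (Nat.factorial j))
      = ((n:ℝ)+1+α) * ((-1:ℝ)^j * genChoose ((n:ℝ) + α) (n-j) * x^j / (Nat.factorial j))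
        + (S j - S (j+1)) := by
    intro j hj
    have hj' : j ≤ n := Nat.lt_succ_iff.mp (mem_range.mp hj)
    have hs : n + 1 - j = (n - j) + 1 := by omega
    have hgc := genChoose_succ z (n-j)
    have hz3 : z - 1 = (n:ℝ) + α := by rw [hz]; ring
    rw [hz3] at hgc
    have hcast : ((n - j : ℕ) : ℝ) = (n:ℝ) - j := by
      rw [Nat.cast_sub hj']
    rw [hcast] at hgc
    have hS1 : S (j+1) = -((-1:ℝ)^j * genChoose z (n-j) * x^(j+1) / (Nat.factorial j)) := by
      rw [hS]
      have hs2 : n+1-(j+1) = n - j := by omega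
      simp only [hs2]
      have hfac : ((Nat.factorial (j+1) : ℝ)) = ((j:ℝ)+1) * (Nat.factorial j) := by
        rw [Nat.factorial_succ]; push_cast; ring
      rw [hfac]
      have h1 : ((j:ℝ)+1) ≠ 0 := by positivity
      have h2 : (Nat.factorial j : ℝ) ≠ 0 := by positivity
      push_cast
      field_simp
      ring
    rw [hS1, hs, hS]
    simp only []
    rw [hs]
    have h2 : (Nat.factorial j : ℝ) ≠ 0 := by positivity
    field_simp
    linear_combination (x^j) * hgc + x^j * genChoose ((n:ℝ) + α) (n-j) * hz
  have hsum := Finset.sum_congr rfl key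
  rw [Finset.sum_add_distrib, Finset.sum_add_distrib, Finset.sum_range_sub' S] at hsum
  have hS0 : S 0 = 0 := by simp [hS]
  have hSn : S (n+1) = (-1:ℝ)^(n+1) * x^(n+1) * ((n:ℝ)+1) / (Nat.factorial (n+1)) := by
    rw [hS]
    have : n+1-(n+1) = 0 := by omega
    simp only [this, genChoose_zero]
    push_cast
    ring
  rw [← Finset.mul_sum, ← Finset.mul_sum, ← Finset.mul_sum] at hsum
  have hfac : ((Nat.factorial (n+1) : ℝ)) ≠ 0 := by positivity
  rw [hS0, hSn] at hsum
  rw [mul_add]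
  linear_combination hsum

lemma laguerre_zero (α x : ℝ) : laguerre 0 α x = 1 := by
  simp [laguerre, genChoose]

lemma laguerre_hasDerivAt (n : ℕ) (α x : ℝ) :
    HasDerivAt (fun y => laguerre (n+1) α y) (-(laguerre n (α+1) x)) x := by
  have h : ∀ k ∈ range (n+2), HasDerivAt
      (fun y : ℝ => (-1 : ℝ) ^ k * genChoose ((↑(n+1) : ℝ) + α) (n+1 - k) * y ^ k / (Nat.factorial k))
      ((-1 : ℝ) ^ k * genChoose ((↑(n+1) : ℝ) + α) (n+1 - k) * (k * x ^ (k-1)) / (Nat.factorial k)) x := by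
    intro k _
    have := (hasDerivAt_pow k x).const_mul ((-1 : ℝ) ^ k * genChoose ((↑(n+1) : ℝ) + α) (n+1 - k))
    simpa [mul_div_assoc, mul_comm, mul_assoc] using this.div_const (Nat.factorial k)
  have hsum := HasDerivAt.fun_sum h
  have : (fun y => laguerre (n+1) α y) = fun y : ℝ => ∑ k ∈ range (n+2),
      (-1 : ℝ) ^ k * genChoose ((↑(n+1) : ℝ) + α) (n+1 - k) * y ^ k / (Nat.factorial k) := by
    funext y; simp [laguerre]
  rw [this]
  refine hsum.congr_deriv (Eq.symm ?_)
  rw [Finset.sum_range_succ']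
  have h0 : ((-1 : ℝ) ^ 0 * genChoose ((↑(n+1) : ℝ) + α) (n+1 - 0) * ((0:ℕ) * x ^ (0-1)) / (Nat.factorial 0)) = 0 := by
    simp
  rw [h0, add_zero, laguerre, neg_eq_iff_eq_neg, ← Finset.sum_neg_distrib]
  apply Finset.sum_congr rfl
  intro k hk
  have hc : ((↑(n+1) : ℝ) + α) = (n:ℝ) + (α+1) := by push_cast; ring
  have hs : n + 1 - (k+1) = n - k := by omega
  rw [hs, ← hc]
  have : ((k+1).factorial : ℝ) = (k+1) * (k.factorial : ℝ) := by
    rw [Nat.factorial_succ]; push_cast; ring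
  rw [this]
  push_cast
  rw [pow_succ]
  have hk0 : (k.factorial : ℝ) ≠ 0 := by positivity
  have hk1 : (k:ℝ)+1 ≠ 0 := by positivity
  field_simp

/-- The new Laguerre polynomial relation (cc12RO) expressing the compatibility
condition for the extended radial oscillator. -/
theorem laguerre_compatibility_relation (l : ℕ) (g : ℝ)
    (ψp ψm : ℝ → ℝ)
    (hψp : ∀ x, ψp x = laguerre l (g + l - 1/2) (-x ^ 2))
    (hψm : ∀ x, ψm x = laguerre l (g + l - 3/2) (-x ^ 2)) :
    ∀ x : ℝ, 0 < x →
      8 * l * ψp x * ψm x + (2 * (1 - 2 * g - 2 * l) / x) * ψp x * deriv ψm x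
        - 4 * x * ψm x * deriv ψp x - 2 * deriv ψm x * deriv ψp x = 0 := by
  intro x hx
  have hx' : x ≠ 0 := ne_of_gt hx
  obtain rfl | ⟨m, rfl⟩ : l = 0 ∨ ∃ m, l = m + 1 := by
    cases l with
    | zero => exact Or.inl rfl
    | succ m => exact Or.inr ⟨m, rfl⟩
  · have hp : ψp = fun _ => (1:ℝ) := by
      funext y; rw [hψp y]; simp [laguerre, genChoose]
    have hm : ψm = fun _ => (1:ℝ) := by
      funext y; rw [hψm y]; simp [laguerre, genChoose]
    rw [hp, hm]
    simp
  · set α : ℝ := g + (↑(m+1):ℝ) - 1/2 with hα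
    have hαm : g + (↑(m+1):ℝ) - 3/2 = α - 1 := by rw [hα]; ring
    set u : ℝ := -x^2 with hu
    set P : ℝ := laguerre (m+1) α u with hP
    set Q : ℝ := laguerre (m+1) (α-1) u with hQd
    set R : ℝ := laguerre m α u with hR
    set Sv : ℝ := laguerre m (α+1) u with hSv
    have hinner : HasDerivAt (fun y : ℝ => -y^2) (-(2*x)) x := by
      simpa using ((hasDerivAt_pow 2 x).fun_neg)
    have hψp' : ψp = fun y => laguerre (m+1) α (-y^2) := funext hψp
    have hψm' : ψm = fun y => laguerre (m+1) (α-1) (-y^2) := by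
      funext y; rw [hψm y, hαm]
    have hdp : deriv ψp x = 2*x*Sv := by
      rw [hψp']
      have hD : HasDerivAt (fun y : ℝ => laguerre (m+1) α (-y^2))
          (-laguerre m (α+1) u * -(2*x)) x := by
        have := (laguerre_hasDerivAt m α u).comp x hinner
        simpa [Function.comp_def, hu] using this
      rw [hD.deriv]
      ring
    have hdm : deriv ψm x = 2*x*R := by
      rw [hψm']
      have hαc : α - 1 + 1 = α := by ring
      have hD : HasDerivAt (fun y : ℝ => laguerre (m+1) (α-1) (-y^2))
          (-laguerre m α u * -(2*x)) x := by
        have := (laguerre_hasDerivAt m (α-1) u).comp x hinner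
        rw [hαc] at this
        simpa [Function.comp_def, hu] using this
      rw [hD.deriv]
      ring
    have h1 : Q = P - R := laguerre_alpha_sub m α u
    have h2 : ((m:ℝ)+1) * P + u * Sv = ((m:ℝ)+1+α) * R := laguerre_three_term m α u
    rw [hψp x, hψm x, hαm, hdp, hdm]
    have hc : 2 * (1 - 2 * g - 2 * (↑(m+1):ℝ)) = -4*α := by
      rw [hα]; push_cast; ring
    rw [hc]
    simp only [← hu]
    rw [← hP, ← hQd]
    field_simp
    linear_combination (8*P) * h2 + (8*((m:ℝ)+1)*P - 8*x^2*Sv) * h1 - 8*P*Sv*hu + 8*P*Q*(Nat.cast_succ (R := ℝ) m)
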